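/- If u(x) = w e^{-i k·x} is a complex-vector-valued plane wave on Minkowski space (w a constant complex vector, k a constant real covector) whose exterior derivative du satisfies *du = i·du, then du ≠ 0 forces k to be null (k·k = 0) and w·k related so that the curvature R_{κλμν} = Re((du)_{κλ}(du)_{μν}) satisfies the vacuum condition R^κ{}_{λκν} = 0 (Ricci flatness). -/

import Mathlib

open scoped BigOperators

/-- Minkowski metric `diag(1,-1,-1,-1)` (equal to its inverse). -/
def eta (i j : Fin 4) : ℝ := if i = j then (if i = 0 then 1 else -1) else 0

/-- Totally antisymmetric symbol with `ε_{0123} = 1`, complex valued. -/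
noncomputable def epsC (a b c d : Fin 4) : ℂ :=
  ((((b : ℤ) - a) * ((c : ℤ) - a) * ((d : ℤ) - a) * ((c : ℤ) - b) * ((d : ℤ) - b)
      * ((d : ℤ) - c) : ℤ) : ℂ) / 12

/-- Complex-valued Minkowski metric. -/
noncomputable def etaC (i j : Fin 4) : ℂ := (eta i j : ℝ)

/-- The plane wave `u_ν(x) = w_ν e^{-i k·x}` with `k·x = k_μ x^μ`. -/
noncomputable def planeWave (w : Fin 4 → ℂ) (kv : Fin 4 → ℝ) (x : Fin 4 → ℝ)
    (n : Fin 4) : ℂ :=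
  w n * Complex.exp (-Complex.I * (∑ m, (kv m : ℂ) * (x m : ℂ)))

/-- The 2-form `du`: `(du)_{μν} = ∂_μ u_ν - ∂_ν u_μ`. -/
noncomputable def du (w : Fin 4 → ℂ) (kv : Fin 4 → ℝ) (x : Fin 4 → ℝ)
    (m n : Fin 4) : ℂ :=
  fderiv ℝ (fun y => planeWave w kv y n) x (Pi.single m 1)
    - fderiv ℝ (fun y => planeWave w kv y m) x (Pi.single n 1)

/-- Hodge star on complex 2-forms: `(*F)_{μν} = (1/2) F^{μ'ν'} ε_{μ'ν'μν}`. -/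
noncomputable def star2C (F : Fin 4 → Fin 4 → ℂ) : Fin 4 → Fin 4 → ℂ := fun m n =>
  (1 / 2) * ∑ a, ∑ b, (∑ a', ∑ b', etaC a a' * etaC b b' * F a' b') * epsC a b m n

/-- The torsion-wave curvature `R_{κλμν} = Re((du)_{κλ}(du)_{μν})`. -/
noncomputable def curv (w : Fin 4 → ℂ) (kv : Fin 4 → ℝ) (x : Fin 4 → ℝ)
    (k l m n : Fin 4) : ℝ :=
  (du w kv x k l * du w kv x m n).re


lemma cint0 : ((0:Fin 4):ℤ) = 0 := rfl
lemma cint1 : ((1:Fin 4):ℤ) = 1 := rfl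
lemma cint2 : ((2:Fin 4):ℤ) = 2 := rfl
lemma cint3 : ((3:Fin 4):ℤ) = 3 := rfl

lemma eps_0001 : epsC 0 0 0 1 = 0 := by norm_num [epsC, cint0, cint1, cint2, cint3]
lemma eps_0101 : epsC 0 1 0 1 = 0 := by norm_num [epsC, cint0, cint1, cint2, cint3]
lemma eps_0201 : epsC 0 2 0 1 = 0 := by norm_num [epsC, cint0, cint1, cint2, cint3]
lemma eps_0301 : epsC 0 3 0 1 = 0 := by norm_num [epsC, cint0, cint1, cint2, cint3]
lemma eps_1001 : epsC 1 0 0 1 = 0 := by norm_num [epsC, cint0, cint1, cint2, cint3]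
lemma eps_1101 : epsC 1 1 0 1 = 0 := by norm_num [epsC, cint0, cint1, cint2, cint3]
lemma eps_1201 : epsC 1 2 0 1 = 0 := by norm_num [epsC, cint0, cint1, cint2, cint3]
lemma eps_1301 : epsC 1 3 0 1 = 0 := by norm_num [epsC, cint0, cint1, cint2, cint3]
lemma eps_2001 : epsC 2 0 0 1 = 0 := by norm_num [epsC, cint0, cint1, cint2, cint3]
lemma eps_2101 : epsC 2 1 0 1 = 0 := by norm_num [epsC, cint0, cint1, cint2, cint3]
lemma eps_2201 : epsC 2 2 0 1 = 0 := by norm_num [epsC, cint0, cint1, cint2, cint3]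
lemma eps_2301 : epsC 2 3 0 1 = 1 := by norm_num [epsC, cint0, cint1, cint2, cint3]
lemma eps_3001 : epsC 3 0 0 1 = 0 := by norm_num [epsC, cint0, cint1, cint2, cint3]
lemma eps_3101 : epsC 3 1 0 1 = 0 := by norm_num [epsC, cint0, cint1, cint2, cint3]
lemma eps_3201 : epsC 3 2 0 1 = -1 := by norm_num [epsC, cint0, cint1, cint2, cint3]
lemma eps_3301 : epsC 3 3 0 1 = 0 := by norm_num [epsC, cint0, cint1, cint2, cint3]
lemma eps_0002 : epsC 0 0 0 2 = 0 := by norm_num [epsC, cint0, cint1, cint2, cint3]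
lemma eps_0102 : epsC 0 1 0 2 = 0 := by norm_num [epsC, cint0, cint1, cint2, cint3]
lemma eps_0202 : epsC 0 2 0 2 = 0 := by norm_num [epsC, cint0, cint1, cint2, cint3]
lemma eps_0302 : epsC 0 3 0 2 = 0 := by norm_num [epsC, cint0, cint1, cint2, cint3]
lemma eps_1002 : epsC 1 0 0 2 = 0 := by norm_num [epsC, cint0, cint1, cint2, cint3]
lemma eps_1102 : epsC 1 1 0 2 = 0 := by norm_num [epsC, cint0, cint1, cint2, cint3]
lemma eps_1202 : epsC 1 2 0 2 = 0 := by norm_num [epsC, cint0, cint1, cint2, cint3]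
lemma eps_1302 : epsC 1 3 0 2 = -1 := by norm_num [epsC, cint0, cint1, cint2, cint3]
lemma eps_2002 : epsC 2 0 0 2 = 0 := by norm_num [epsC, cint0, cint1, cint2, cint3]
lemma eps_2102 : epsC 2 1 0 2 = 0 := by norm_num [epsC, cint0, cint1, cint2, cint3]
lemma eps_2202 : epsC 2 2 0 2 = 0 := by norm_num [epsC, cint0, cint1, cint2, cint3]
lemma eps_2302 : epsC 2 3 0 2 = 0 := by norm_num [epsC, cint0, cint1, cint2, cint3]
lemma eps_3002 : epsC 3 0 0 2 = 0 := by norm_num [epsC, cint0, cint1, cint2, cint3]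
lemma eps_3102 : epsC 3 1 0 2 = 1 := by norm_num [epsC, cint0, cint1, cint2, cint3]
lemma eps_3202 : epsC 3 2 0 2 = 0 := by norm_num [epsC, cint0, cint1, cint2, cint3]
lemma eps_3302 : epsC 3 3 0 2 = 0 := by norm_num [epsC, cint0, cint1, cint2, cint3]
lemma eps_0003 : epsC 0 0 0 3 = 0 := by norm_num [epsC, cint0, cint1, cint2, cint3]
lemma eps_0103 : epsC 0 1 0 3 = 0 := by norm_num [epsC, cint0, cint1, cint2, cint3]
lemma eps_0203 : epsC 0 2 0 3 = 0 := by norm_num [epsC, cint0, cint1, cint2, cint3]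
lemma eps_0303 : epsC 0 3 0 3 = 0 := by norm_num [epsC, cint0, cint1, cint2, cint3]
lemma eps_1003 : epsC 1 0 0 3 = 0 := by norm_num [epsC, cint0, cint1, cint2, cint3]
lemma eps_1103 : epsC 1 1 0 3 = 0 := by norm_num [epsC, cint0, cint1, cint2, cint3]
lemma eps_1203 : epsC 1 2 0 3 = 1 := by norm_num [epsC, cint0, cint1, cint2, cint3]
lemma eps_1303 : epsC 1 3 0 3 = 0 := by norm_num [epsC, cint0, cint1, cint2, cint3]
lemma eps_2003 : epsC 2 0 0 3 = 0 := by norm_num [epsC, cint0, cint1, cint2, cint3]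
lemma eps_2103 : epsC 2 1 0 3 = -1 := by norm_num [epsC, cint0, cint1, cint2, cint3]
lemma eps_2203 : epsC 2 2 0 3 = 0 := by norm_num [epsC, cint0, cint1, cint2, cint3]
lemma eps_2303 : epsC 2 3 0 3 = 0 := by norm_num [epsC, cint0, cint1, cint2, cint3]
lemma eps_3003 : epsC 3 0 0 3 = 0 := by norm_num [epsC, cint0, cint1, cint2, cint3]
lemma eps_3103 : epsC 3 1 0 3 = 0 := by norm_num [epsC, cint0, cint1, cint2, cint3]
lemma eps_3203 : epsC 3 2 0 3 = 0 := by norm_num [epsC, cint0, cint1, cint2, cint3]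
lemma eps_3303 : epsC 3 3 0 3 = 0 := by norm_num [epsC, cint0, cint1, cint2, cint3]
lemma etaC_00 : etaC 0 0 = 1 := by simp [etaC, eta]
lemma etaR_00 : eta 0 0 = 1 := by simp [eta]
lemma etaC_01 : etaC 0 1 = 0 := by simp [etaC, eta]
lemma etaR_01 : eta 0 1 = 0 := by simp [eta]
lemma etaC_02 : etaC 0 2 = 0 := by simp [etaC, eta]
lemma etaR_02 : eta 0 2 = 0 := by simp [eta]
lemma etaC_03 : etaC 0 3 = 0 := by simp [etaC, eta]
lemma etaR_03 : eta 0 3 = 0 := by simp [eta]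
lemma etaC_10 : etaC 1 0 = 0 := by simp [etaC, eta]
lemma etaR_10 : eta 1 0 = 0 := by simp [eta]
lemma etaC_11 : etaC 1 1 = -1 := by simp [etaC, eta]
lemma etaR_11 : eta 1 1 = -1 := by simp [eta]
lemma etaC_12 : etaC 1 2 = 0 := by simp [etaC, eta]
lemma etaR_12 : eta 1 2 = 0 := by simp [eta]
lemma etaC_13 : etaC 1 3 = 0 := by simp [etaC, eta]
lemma etaR_13 : eta 1 3 = 0 := by simp [eta]
lemma etaC_20 : etaC 2 0 = 0 := by simp [etaC, eta]
lemma etaR_20 : eta 2 0 = 0 := by simp [eta]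
lemma etaC_21 : etaC 2 1 = 0 := by simp [etaC, eta]
lemma etaR_21 : eta 2 1 = 0 := by simp [eta]
lemma etaC_22 : etaC 2 2 = -1 := by simp [etaC, eta]
lemma etaR_22 : eta 2 2 = -1 := by simp [eta]
lemma etaC_23 : etaC 2 3 = 0 := by simp [etaC, eta]
lemma etaR_23 : eta 2 3 = 0 := by simp [eta]
lemma etaC_30 : etaC 3 0 = 0 := by simp [etaC, eta]
lemma etaR_30 : eta 3 0 = 0 := by simp [eta]
lemma etaC_31 : etaC 3 1 = 0 := by simp [etaC, eta]
lemma etaR_31 : eta 3 1 = 0 := by simp [eta]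
lemma etaC_32 : etaC 3 2 = 0 := by simp [etaC, eta]
lemma etaR_32 : eta 3 2 = 0 := by simp [eta]
lemma etaC_33 : etaC 3 3 = -1 := by simp [etaC, eta]
lemma etaR_33 : eta 3 3 = -1 := by simp [eta]


lemma hasFDeriv_lin (kv : Fin 4 → ℝ) (x : Fin 4 → ℝ) :
    HasFDerivAt (fun y : Fin 4 → ℝ => ∑ m, (kv m : ℂ) * (y m : ℂ))
      (∑ j, (kv j : ℂ) • (Complex.ofRealCLM.comp (ContinuousLinearMap.proj j))) x := by
  apply HasFDerivAt.fun_sum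
  intro m _
  have h := (Complex.ofRealCLM.comp
      (ContinuousLinearMap.proj (R := ℝ) (φ := fun _ : Fin 4 => ℝ) m)).hasFDerivAt (x := x)
  exact h.const_mul _

lemma hasFDeriv_pw (w : Fin 4 → ℂ) (kv : Fin 4 → ℝ) (x : Fin 4 → ℝ) (n : Fin 4) :
    HasFDerivAt (fun y => planeWave w kv y n)
      ((w n * Complex.exp (-Complex.I * (∑ m, (kv m : ℂ) * (x m : ℂ))) * (-Complex.I)) •
        (∑ j, (kv j : ℂ) • (Complex.ofRealCLM.comp (ContinuousLinearMap.proj j)))) x := by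
  have h1 := (hasFDeriv_lin kv x).const_mul (-Complex.I)
  have h2 := h1.cexp
  have h3 := h2.const_mul (w n)
  have h4 : (w n • Complex.exp (-Complex.I * ∑ m, (kv m : ℂ) * (x m : ℂ)) •
      (-Complex.I) • (∑ j, (kv j : ℂ) • (Complex.ofRealCLM.comp (ContinuousLinearMap.proj j)) :
        (Fin 4 → ℝ) →L[ℝ] ℂ))
      = (w n * Complex.exp (-Complex.I * (∑ m, (kv m : ℂ) * (x m : ℂ))) * (-Complex.I)) •
        (∑ j, (kv j : ℂ) • (Complex.ofRealCLM.comp (ContinuousLinearMap.proj j))) := by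
    rw [smul_smul, smul_smul, mul_assoc]
  exact h4 ▸ h3

lemma du_eq (w : Fin 4 → ℂ) (kv : Fin 4 → ℝ) (x : Fin 4 → ℝ) (m n : Fin 4) :
    du w kv x m n = Complex.exp (-Complex.I * (∑ j, (kv j : ℂ) * (x j : ℂ))) * (-Complex.I) *
      ((kv m : ℂ) * w n - (kv n : ℂ) * w m) := by
  have heval : ∀ m : Fin 4,
      ((∑ j, (kv j : ℂ) • (Complex.ofRealCLM.comp (ContinuousLinearMap.proj j)) :
        (Fin 4 → ℝ) →L[ℝ] ℂ)) (Pi.single m 1) = (kv m : ℂ) := by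
    intro m
    simp only [ContinuousLinearMap.sum_apply, ContinuousLinearMap.smul_apply,
      ContinuousLinearMap.comp_apply, ContinuousLinearMap.proj_apply,
      Complex.ofRealCLM_apply, smul_eq_mul]
    rw [Finset.sum_eq_single m]
    · simp
    · intro b _ hb
      simp [Pi.single_apply, hb]
    · simp
  rw [du, (hasFDeriv_pw w kv x n).fderiv, (hasFDeriv_pw w kv x m).fderiv]
  simp only [ContinuousLinearMap.smul_apply, heval, smul_eq_mul]
  ring

set_option maxHeartbeats 4000000 in
/-- for a plane wave `u(x) = w e^{-ik·x}` with self-dual `du`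
(`*du = i du`) and `du ≠ 0`, the wave covector `k` is null, and the curvature
`R_{κλμν} = Re((du)_{κλ}(du)_{μν})` is Ricci flat: `R^κ{}_{λκν} = 0`. -/
theorem statement19 (w : Fin 4 → ℂ) (kv : Fin 4 → ℝ)
    (hsd : ∀ x m n, star2C (du w kv x) m n = Complex.I * du w kv x m n)
    (hne : ¬ ∀ x m n, du w kv x m n = 0) :
    (∑ m, ∑ n, eta m n * kv m * kv n = 0) ∧
    (∀ x l n, (∑ k, ∑ a, eta k a * curv w kv x a l k n) = 0) := by
  have hdu0 : ∀ m n : Fin 4, du w kv 0 m n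
      = -Complex.I * ((kv m : ℂ) * w n - (kv n : ℂ) * w m) := by
    intro m n
    rw [du_eq]
    simp
  have h1 := hsd 0 0 1
  have h2 := hsd 0 0 2
  have h3 := hsd 0 0 3
  simp only [star2C, Fin.sum_univ_four, hdu0,
    eps_0001, eps_0101, eps_0201, eps_0301, eps_1001, eps_1101, eps_1201, eps_1301,
    eps_2001, eps_2101, eps_2201, eps_2301, eps_3001, eps_3101, eps_3201, eps_3301,
    eps_0002, eps_0102, eps_0202, eps_0302, eps_1002, eps_1102, eps_1202, eps_1302,
    eps_2002, eps_2102, eps_2202, eps_2302, eps_3002, eps_3102, eps_3202, eps_3302,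
    eps_0003, eps_0103, eps_0203, eps_0303, eps_1003, eps_1103, eps_1203, eps_1303,
    eps_2003, eps_2103, eps_2203, eps_2303, eps_3003, eps_3103, eps_3203, eps_3303,
    etaC_00, etaC_01, etaC_02, etaC_03, etaC_10, etaC_11, etaC_12, etaC_13,
    etaC_20, etaC_21, etaC_22, etaC_23, etaC_30, etaC_31, etaC_32, etaC_33] at h1 h2 h3
  have hI : Complex.I ^ 2 = -1 := Complex.I_sq
  have hE1 : (kv 2 : ℂ) * w 3 - (kv 3 : ℂ) * w 2
      - Complex.I * ((kv 0 : ℂ) * w 1 - (kv 1 : ℂ) * w 0) = 0 := by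
    linear_combination Complex.I * h1 + ((kv 2 : ℂ) * w 3 - (kv 3 : ℂ) * w 2
      - Complex.I * ((kv 0 : ℂ) * w 1 - (kv 1 : ℂ) * w 0)) * hI
  have hE2 : (kv 3 : ℂ) * w 1 - (kv 1 : ℂ) * w 3
      - Complex.I * ((kv 0 : ℂ) * w 2 - (kv 2 : ℂ) * w 0) = 0 := by
    linear_combination Complex.I * h2 + ((kv 3 : ℂ) * w 1 - (kv 1 : ℂ) * w 3
      - Complex.I * ((kv 0 : ℂ) * w 2 - (kv 2 : ℂ) * w 0)) * hI
  have hE3 : (kv 1 : ℂ) * w 2 - (kv 2 : ℂ) * w 1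
      - Complex.I * ((kv 0 : ℂ) * w 3 - (kv 3 : ℂ) * w 0) = 0 := by
    linear_combination Complex.I * h3 + ((kv 1 : ℂ) * w 2 - (kv 2 : ℂ) * w 1
      - Complex.I * ((kv 0 : ℂ) * w 3 - (kv 3 : ℂ) * w 0)) * hI
  -- nondegeneracy
  have hanz : ¬ ((kv 0 : ℂ) * w 1 - (kv 1 : ℂ) * w 0 = 0
      ∧ (kv 0 : ℂ) * w 2 - (kv 2 : ℂ) * w 0 = 0
      ∧ (kv 0 : ℂ) * w 3 - (kv 3 : ℂ) * w 0 = 0) := by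
    rintro ⟨ha, hb, hc⟩
    push_neg at hne
    obtain ⟨x0, m0, n0, hx⟩ := hne
    apply hx
    rw [du_eq]
    have hF0 : (kv m0 : ℂ) * w n0 - (kv n0 : ℂ) * w m0 = 0 := by
      fin_cases m0 <;> fin_cases n0
      · show (kv 0 : ℂ) * w 0 - (kv 0 : ℂ) * w 0 = 0
        linear_combination (0 : ℂ)
      · show (kv 0 : ℂ) * w 1 - (kv 1 : ℂ) * w 0 = 0
        linear_combination ha
      · show (kv 0 : ℂ) * w 2 - (kv 2 : ℂ) * w 0 = 0
        linear_combination hb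
      · show (kv 0 : ℂ) * w 3 - (kv 3 : ℂ) * w 0 = 0
        linear_combination hc
      · show (kv 1 : ℂ) * w 0 - (kv 0 : ℂ) * w 1 = 0
        linear_combination -ha
      · show (kv 1 : ℂ) * w 1 - (kv 1 : ℂ) * w 1 = 0
        linear_combination (0 : ℂ)
      · show (kv 1 : ℂ) * w 2 - (kv 2 : ℂ) * w 1 = 0
        linear_combination hE3 + Complex.I * hc
      · show (kv 1 : ℂ) * w 3 - (kv 3 : ℂ) * w 1 = 0
        linear_combination -hE2 - Complex.I * hb
      · show (kv 2 : ℂ) * w 0 - (kv 0 : ℂ) * w 2 = 0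
        linear_combination -hb
      · show (kv 2 : ℂ) * w 1 - (kv 1 : ℂ) * w 2 = 0
        linear_combination -hE3 - Complex.I * hc
      · show (kv 2 : ℂ) * w 2 - (kv 2 : ℂ) * w 2 = 0
        linear_combination (0 : ℂ)
      · show (kv 2 : ℂ) * w 3 - (kv 3 : ℂ) * w 2 = 0
        linear_combination hE1 + Complex.I * ha
      · show (kv 3 : ℂ) * w 0 - (kv 0 : ℂ) * w 3 = 0
        linear_combination -hc
      · show (kv 3 : ℂ) * w 1 - (kv 1 : ℂ) * w 3 = 0
        linear_combination hE2 + Complex.I * hb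
      · show (kv 3 : ℂ) * w 2 - (kv 2 : ℂ) * w 3 = 0
        linear_combination -hE1 - Complex.I * ha
      · show (kv 3 : ℂ) * w 3 - (kv 3 : ℂ) * w 3 = 0
        linear_combination (0 : ℂ)
    rw [hF0]
    ring
  have hkx : (kv 0 : ℂ) ≠ 0 ∨ (kv 1 : ℂ) ≠ 0 ∨ (kv 2 : ℂ) ≠ 0 ∨ (kv 3 : ℂ) ≠ 0 := by
    by_contra h
    push_neg at h
    obtain ⟨h0, h1', h2', h3'⟩ := h
    exact hanz ⟨by rw [h0, h1']; ring, by rw [h0, h2']; ring, by rw [h0, h3']; ring⟩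
  -- scalar identities
  have hKw1 : ((kv 0:ℂ)^2 - (kv 1:ℂ)^2 - (kv 2:ℂ)^2 - (kv 3:ℂ)^2) * w 1
      = ((kv 0:ℂ) * w 0 - (kv 1:ℂ) * w 1 - (kv 2:ℂ) * w 2 - (kv 3:ℂ) * w 3) * (kv 1:ℂ) := by
    linear_combination (kv 2:ℂ) * hE3 - (kv 3:ℂ) * hE2 + Complex.I * (kv 0:ℂ) * hE1 + ((kv 0:ℂ)*(kv 0:ℂ)*w 1 - (kv 0:ℂ)*(kv 1:ℂ)*w 0) * hI
  have hKw2 : ((kv 0:ℂ)^2 - (kv 1:ℂ)^2 - (kv 2:ℂ)^2 - (kv 3:ℂ)^2) * w 2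
      = ((kv 0:ℂ) * w 0 - (kv 1:ℂ) * w 1 - (kv 2:ℂ) * w 2 - (kv 3:ℂ) * w 3) * (kv 2:ℂ) := by
    linear_combination (kv 3:ℂ) * hE1 - (kv 1:ℂ) * hE3 + Complex.I * (kv 0:ℂ) * hE2 + ((kv 0:ℂ)*(kv 0:ℂ)*w 2 - (kv 0:ℂ)*(kv 2:ℂ)*w 0) * hI
  have hKw3 : ((kv 0:ℂ)^2 - (kv 1:ℂ)^2 - (kv 2:ℂ)^2 - (kv 3:ℂ)^2) * w 3
      = ((kv 0:ℂ) * w 0 - (kv 1:ℂ) * w 1 - (kv 2:ℂ) * w 2 - (kv 3:ℂ) * w 3) * (kv 3:ℂ) := by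
    linear_combination (kv 1:ℂ) * hE2 - (kv 2:ℂ) * hE1 + Complex.I * (kv 0:ℂ) * hE3 + ((kv 0:ℂ)*(kv 0:ℂ)*w 3 - (kv 0:ℂ)*(kv 3:ℂ)*w 0) * hI
  have hKP : (kv 0:ℂ) * ((kv 0:ℂ) * w 0 - (kv 1:ℂ) * w 1 - (kv 2:ℂ) * w 2 - (kv 3:ℂ) * w 3)
      = w 0 * ((kv 0:ℂ)^2 - (kv 1:ℂ)^2 - (kv 2:ℂ)^2 - (kv 3:ℂ)^2) := by
    linear_combination -Complex.I * (kv 1:ℂ) * hE1 - Complex.I * (kv 2:ℂ) * hE2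
      - Complex.I * (kv 3:ℂ) * hE3 + ((kv 1:ℂ)*(kv 1:ℂ)*w 0 + (kv 2:ℂ)*(kv 2:ℂ)*w 0 + (kv 3:ℂ)*(kv 3:ℂ)*w 0
          - (kv 0:ℂ)*(kv 1:ℂ)*w 1 - (kv 0:ℂ)*(kv 2:ℂ)*w 2 - (kv 0:ℂ)*(kv 3:ℂ)*w 3) * hI
  have hKa : ((kv 0:ℂ)^2 - (kv 1:ℂ)^2 - (kv 2:ℂ)^2 - (kv 3:ℂ)^2)
      * ((kv 0 : ℂ) * w 1 - (kv 1 : ℂ) * w 0) = 0 := by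
    linear_combination (kv 0:ℂ) * hKw1 + (kv 1:ℂ) * hKP
  have hKb : ((kv 0:ℂ)^2 - (kv 1:ℂ)^2 - (kv 2:ℂ)^2 - (kv 3:ℂ)^2)
      * ((kv 0 : ℂ) * w 2 - (kv 2 : ℂ) * w 0) = 0 := by
    linear_combination (kv 0:ℂ) * hKw2 + (kv 2:ℂ) * hKP
  have hKc : ((kv 0:ℂ)^2 - (kv 1:ℂ)^2 - (kv 2:ℂ)^2 - (kv 3:ℂ)^2)
      * ((kv 0 : ℂ) * w 3 - (kv 3 : ℂ) * w 0) = 0 := by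
    linear_combination (kv 0:ℂ) * hKw3 + (kv 3:ℂ) * hKP
  have hK : ((kv 0:ℂ)^2 - (kv 1:ℂ)^2 - (kv 2:ℂ)^2 - (kv 3:ℂ)^2) = 0 := by
    by_contra hKne
    exact hanz ⟨(mul_eq_zero.mp hKa).resolve_left hKne,
      (mul_eq_zero.mp hKb).resolve_left hKne, (mul_eq_zero.mp hKc).resolve_left hKne⟩
  have hP : ((kv 0:ℂ) * w 0 - (kv 1:ℂ) * w 1 - (kv 2:ℂ) * w 2 - (kv 3:ℂ) * w 3) = 0 := by
    rcases hkx with h | h | h | h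
    · have : ((kv 0:ℂ) * w 0 - (kv 1:ℂ) * w 1 - (kv 2:ℂ) * w 2 - (kv 3:ℂ) * w 3) * (kv 0:ℂ)
          = 0 := by linear_combination hKP + w 0 * hK
      exact (mul_eq_zero.mp this).resolve_right h
    · have : ((kv 0:ℂ) * w 0 - (kv 1:ℂ) * w 1 - (kv 2:ℂ) * w 2 - (kv 3:ℂ) * w 3) * (kv 1:ℂ)
          = 0 := by linear_combination -hKw1 + w 1 * hK
      exact (mul_eq_zero.mp this).resolve_right h
    · have : ((kv 0:ℂ) * w 0 - (kv 1:ℂ) * w 1 - (kv 2:ℂ) * w 2 - (kv 3:ℂ) * w 3) * (kv 2:ℂ)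
          = 0 := by linear_combination -hKw2 + w 2 * hK
      exact (mul_eq_zero.mp this).resolve_right h
    · have : ((kv 0:ℂ) * w 0 - (kv 1:ℂ) * w 1 - (kv 2:ℂ) * w 2 - (kv 3:ℂ) * w 3) * (kv 3:ℂ)
          = 0 := by linear_combination -hKw3 + w 3 * hK
      exact (mul_eq_zero.mp this).resolve_right h
  have hQk1 : (w 0^2 - w 1^2 - w 2^2 - w 3^2) * (kv 1:ℂ)
      = ((kv 0:ℂ) * w 0 - (kv 1:ℂ) * w 1 - (kv 2:ℂ) * w 2 - (kv 3:ℂ) * w 3) * w 1 := by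
    linear_combination -w 2 * hE3 + w 3 * hE2 - Complex.I * w 0 * hE1 + ((kv 1:ℂ)*w 0*w 0 - (kv 0:ℂ)*w 0*w 1) * hI
  have hQk2 : (w 0^2 - w 1^2 - w 2^2 - w 3^2) * (kv 2:ℂ)
      = ((kv 0:ℂ) * w 0 - (kv 1:ℂ) * w 1 - (kv 2:ℂ) * w 2 - (kv 3:ℂ) * w 3) * w 2 := by
    linear_combination -w 3 * hE1 + w 1 * hE3 - Complex.I * w 0 * hE2 + ((kv 2:ℂ)*w 0*w 0 - (kv 0:ℂ)*w 0*w 2) * hI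
  have hQk3 : (w 0^2 - w 1^2 - w 2^2 - w 3^2) * (kv 3:ℂ)
      = ((kv 0:ℂ) * w 0 - (kv 1:ℂ) * w 1 - (kv 2:ℂ) * w 2 - (kv 3:ℂ) * w 3) * w 3 := by
    linear_combination -w 1 * hE2 + w 2 * hE1 - Complex.I * w 0 * hE3 + ((kv 3:ℂ)*w 0*w 0 - (kv 0:ℂ)*w 0*w 3) * hI
  have hQP : (kv 0:ℂ) * (w 0^2 - w 1^2 - w 2^2 - w 3^2)
      = w 0 * ((kv 0:ℂ) * w 0 - (kv 1:ℂ) * w 1 - (kv 2:ℂ) * w 2 - (kv 3:ℂ) * w 3) := by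
    linear_combination -Complex.I * w 1 * hE1 - Complex.I * w 2 * hE2 - Complex.I * w 3 * hE3
      + (-(kv 0:ℂ) * (w 1^2 + w 2^2 + w 3^2)
          + w 0 * ((kv 1:ℂ) * w 1 + (kv 2:ℂ) * w 2 + (kv 3:ℂ) * w 3)) * hI
  have hQ : (w 0^2 - w 1^2 - w 2^2 - w 3^2 : ℂ) = 0 := by
    rcases hkx with h | h | h | h
    · have : (w 0^2 - w 1^2 - w 2^2 - w 3^2) * (kv 0:ℂ) = 0 := by
        linear_combination hQP + w 0 * hP
      exact (mul_eq_zero.mp this).resolve_right h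
    · have : (w 0^2 - w 1^2 - w 2^2 - w 3^2) * (kv 1:ℂ) = 0 := by
        linear_combination hQk1 + w 1 * hP
      exact (mul_eq_zero.mp this).resolve_right h
    · have : (w 0^2 - w 1^2 - w 2^2 - w 3^2) * (kv 2:ℂ) = 0 := by
        linear_combination hQk2 + w 2 * hP
      exact (mul_eq_zero.mp this).resolve_right h
    · have : (w 0^2 - w 1^2 - w 2^2 - w 3^2) * (kv 3:ℂ) = 0 := by
        linear_combination hQk3 + w 3 * hP
      exact (mul_eq_zero.mp this).resolve_right h
  constructor
  · -- k is null
    have hKr : kv 0 ^ 2 - kv 1 ^ 2 - kv 2 ^ 2 - kv 3 ^ 2 = 0 := by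
      exact_mod_cast hK
    simp only [Fin.sum_univ_four, etaR_00, etaR_01, etaR_02, etaR_03, etaR_10, etaR_11,
      etaR_12, etaR_13, etaR_20, etaR_21, etaR_22, etaR_23, etaR_30, etaR_31, etaR_32, etaR_33]
    linear_combination hKr
  · -- Ricci flatness
    intro x l n
    have hz : du w kv x 0 l * du w kv x 0 n - du w kv x 1 l * du w kv x 1 n
        - du w kv x 2 l * du w kv x 2 n - du w kv x 3 l * du w kv x 3 n = 0 := by
      simp only [du_eq]
      linear_combination
        ((Complex.exp (-Complex.I * (∑ j, (kv j : ℂ) * (x j : ℂ))))^2 * Complex.I^2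
          * (w l * w n)) * hK
        - ((Complex.exp (-Complex.I * (∑ j, (kv j : ℂ) * (x j : ℂ))))^2 * Complex.I^2
            * ((kv l : ℂ) * w n + w l * (kv n : ℂ))) * hP
        + ((Complex.exp (-Complex.I * (∑ j, (kv j : ℂ) * (x j : ℂ))))^2 * Complex.I^2
            * ((kv l : ℂ) * (kv n : ℂ))) * hQ
    have hre := congrArg Complex.re hz
    simp only [Complex.sub_re, Complex.zero_re] at hre
    simp only [Fin.sum_univ_four, curv, etaR_00, etaR_01, etaR_02, etaR_03, etaR_10, etaR_11,
      etaR_12, etaR_13, etaR_20, etaR_21, etaR_22, etaR_23, etaR_30, etaR_31, etaR_32, etaR_33]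
    linarith [hre]
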